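/- The matrices A¹ = [[1,0,0,0],[0,1,0,0],[0,0,1,1],[0,0,1,1]] and A² = [[1,0,0,0],[0,1,1,0],[0,1,0,1],[0,0,1,1]] are fractionally isomorphic, but there is no pair (X, Y) of 4×4 doubly stochastic matrices satisfying XA¹ = A²Y and XᵗA² = A¹Yᵗ. -/

import Mathlib

open Finset Matrix

/-- A doubly stochastic matrix: nonnegative with all row sums and column sums equal to 1. -/
def DoublyStochastic {V : Type*} [Fintype V] (X : Matrix V V ℝ) : Prop :=
  (∀ i j, 0 ≤ X i j) ∧ (∀ i, ∑ j, X i j = 1) ∧ (∀ j, ∑ i, X i j = 1)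

/-- The direct sum `A¹ ⊕ A²` of two matrices: block diagonal with blocks `A¹` and `A²`. -/
def dsum {V1 W1 V2 W2 : Type*} (A1 : Matrix V1 W1 ℝ) (A2 : Matrix V2 W2 ℝ) :
    Matrix (V1 ⊕ V2) (W1 ⊕ W2) ℝ :=
  Matrix.of fun v w =>
    match v, w with
    | .inl v, .inl w => A1 v w
    | .inr v, .inr w => A2 v w
    | _, _ => 0

/-- Fractional isomorphism of `A¹` and `A²`: a fractional automorphism `(X, Y)` of
`A¹ ⊕ A²` whose nonzero pattern connects each summand to the other. -/
def FracIso {V1 W1 V2 W2 : Type*} [Fintype V1] [Fintype W1] [Fintype V2] [Fintype W2]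
    (A1 : Matrix V1 W1 ℝ) (A2 : Matrix V2 W2 ℝ) : Prop :=
  ∃ (X : Matrix (V1 ⊕ V2) (V1 ⊕ V2) ℝ) (Y : Matrix (W1 ⊕ W2) (W1 ⊕ W2) ℝ),
    DoublyStochastic X ∧ DoublyStochastic Y ∧ X * dsum A1 A2 = dsum A1 A2 * Y ∧
    (∀ v1 : V1, ∃ v2 : V2, X (.inl v1) (.inr v2) ≠ 0) ∧
    (∀ v2 : V2, ∃ v1 : V1, X (.inr v2) (.inl v1) ≠ 0) ∧
    (∀ w1 : W1, ∃ w2 : W2, Y (.inl w1) (.inr w2) ≠ 0) ∧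
    (∀ w2 : W2, ∃ w1 : W1, Y (.inr w2) (.inl w1) ≠ 0)

/-- Membership in the first class `{inl 0, inl 1, inr 0}` of the joint equitable partition. -/
def inP : Fin 4 ⊕ Fin 4 → Bool
  | .inl 0 => true
  | .inl 1 => true
  | .inr 0 => true
  | _ => false

@[simp] lemma inP_inl : inP (.inl 0) = true ∧ inP (.inl 1) = true ∧
    inP (.inl 2) = false ∧ inP (.inl 3) = false := ⟨rfl, rfl, rfl, rfl⟩

@[simp] lemma inP_inr : inP (.inr 0) = true ∧ inP (.inr 1) = false ∧
    inP (.inr 2) = false ∧ inP (.inr 3) = false := ⟨rfl, rfl, rfl, rfl⟩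

@[simp] lemma inP_mk (h2 : 2 < 4) (h3 : 3 < 4) : inP (.inl ⟨2, h2⟩) = false ∧
    inP (.inl ⟨3, h3⟩) = false ∧ inP (.inr ⟨2, h2⟩) = false ∧ inP (.inr ⟨3, h3⟩) = false :=
  ⟨rfl, rfl, rfl, rfl⟩

/-- The averaging matrix of the joint equitable partition
`{inl 0, inl 1, inr 0} ∪ {inl 2, inl 3, inr 1, inr 2, inr 3}`. -/
noncomputable def Xmat : Matrix (Fin 4 ⊕ Fin 4) (Fin 4 ⊕ Fin 4) ℝ :=
  Matrix.of fun i j =>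
    if inP i then (if inP j then 1/3 else 0) else (if inP j then 0 else 1/5)

lemma Xmat_ds : DoublyStochastic Xmat := by
  refine ⟨fun i j => ?_, fun i => ?_, fun j => ?_⟩
  · simp only [Xmat, Matrix.of_apply]; split_ifs <;> norm_num
  · rcases i with i | i <;> fin_cases i <;>
      norm_num [Xmat, Fintype.sum_sum_type, Fin.sum_univ_four, inP_inl, inP_inr, inP_mk]
  · rcases j with j | j <;> fin_cases j <;>
      norm_num [Xmat, Fintype.sum_sum_type, Fin.sum_univ_four, inP_inl, inP_inr, inP_mk]

lemma vecCons_four_two {α : Type*} (a : α) (u : Fin 3 → α) : vecCons a u 2 = u 1 := rfl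

lemma vecCons_four_three {α : Type*} (a : α) (u : Fin 3 → α) : vecCons a u 3 = u 2 := rfl

lemma vecCons_three_two {α : Type*} (a : α) (u : Fin 2 → α) : vecCons a u 2 = u 1 := rfl

set_option maxHeartbeats 1000000 in
lemma Xmat_comm :
    Xmat * dsum (!![1,0,0,0; 0,1,0,0; 0,0,1,1; 0,0,1,1] : Matrix (Fin 4) (Fin 4) ℝ)
                (!![1,0,0,0; 0,1,1,0; 0,1,0,1; 0,0,1,1] : Matrix (Fin 4) (Fin 4) ℝ) =
    dsum (!![1,0,0,0; 0,1,0,0; 0,0,1,1; 0,0,1,1] : Matrix (Fin 4) (Fin 4) ℝ)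
         (!![1,0,0,0; 0,1,1,0; 0,1,0,1; 0,0,1,1] : Matrix (Fin 4) (Fin 4) ℝ) * Xmat := by
  ext i j
  simp only [Matrix.mul_apply, Fintype.sum_sum_type, Fin.sum_univ_four]
  rcases i with i | i <;> rcases j with j | j <;> fin_cases i <;> fin_cases j <;>
    norm_num [Xmat, dsum, inP_inl, inP_inr, inP_mk, Matrix.cons_val, vecCons_four_two, vecCons_four_three,
      vecCons_three_two, Matrix.vecHead, Matrix.vecTail, Function.comp]

lemma sum_entries_mul_left {n : Type*} [Fintype n] (X A : Matrix n n ℝ)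
    (hX : ∀ j, ∑ i, X i j = 1) : ∑ i, ∑ j, (X * A) i j = ∑ k, ∑ j, A k j := by
  calc ∑ i, ∑ j, (X * A) i j = ∑ i, ∑ k, X i k * (∑ j, A k j) := by
        simp only [Matrix.mul_apply, Finset.mul_sum]
        exact Finset.sum_congr rfl fun i _ => Finset.sum_comm
    _ = ∑ k, (∑ i, X i k) * (∑ j, A k j) := by
        rw [Finset.sum_comm]; simp [Finset.sum_mul]
    _ = ∑ k, ∑ j, A k j := by simp [hX]

lemma sum_entries_mul_right {n : Type*} [Fintype n] (A Y : Matrix n n ℝ)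
    (hY : ∀ i, ∑ j, Y i j = 1) : ∑ i, ∑ j, (A * Y) i j = ∑ i, ∑ k, A i k := by
  calc ∑ i, ∑ j, (A * Y) i j = ∑ i, ∑ k, A i k * (∑ j, Y k j) := by
        refine Finset.sum_congr rfl fun i _ => ?_
        simp only [Matrix.mul_apply, Finset.mul_sum]
        exact Finset.sum_comm
    _ = ∑ i, ∑ k, A i k := by simp [hY]

/-- The matrices `A¹` and `A²` below are fractionally isomorphic, but
there is no pair `(X, Y)` of 4×4 doubly stochastic matrices with `XA¹ = A²Y` and
`XᵗA² = A¹Yᵗ`. -/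
theorem fracIso_example_no_doubly_stochastic_pair :
    FracIso (!![1,0,0,0; 0,1,0,0; 0,0,1,1; 0,0,1,1] : Matrix (Fin 4) (Fin 4) ℝ)
            (!![1,0,0,0; 0,1,1,0; 0,1,0,1; 0,0,1,1] : Matrix (Fin 4) (Fin 4) ℝ) ∧
    ¬ ∃ X Y : Matrix (Fin 4) (Fin 4) ℝ,
        DoublyStochastic X ∧ DoublyStochastic Y ∧
        X * (!![1,0,0,0; 0,1,0,0; 0,0,1,1; 0,0,1,1] : Matrix (Fin 4) (Fin 4) ℝ) =
          (!![1,0,0,0; 0,1,1,0; 0,1,0,1; 0,0,1,1] : Matrix (Fin 4) (Fin 4) ℝ) * Y ∧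
        Xᵀ * (!![1,0,0,0; 0,1,1,0; 0,1,0,1; 0,0,1,1] : Matrix (Fin 4) (Fin 4) ℝ) =
          (!![1,0,0,0; 0,1,0,0; 0,0,1,1; 0,0,1,1] : Matrix (Fin 4) (Fin 4) ℝ) * Yᵀ := by
  constructor
  · refine ⟨Xmat, Xmat, Xmat_ds, Xmat_ds, Xmat_comm, ?_, ?_, ?_, ?_⟩
    · intro v1; fin_cases v1
      exacts [⟨0, by norm_num [Xmat, inP_inl, inP_inr, inP_mk]⟩, ⟨0, by norm_num [Xmat, inP_inl, inP_inr, inP_mk]⟩,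
        ⟨1, by norm_num [Xmat, inP_inl, inP_inr, inP_mk]⟩, ⟨1, by norm_num [Xmat, inP_inl, inP_inr, inP_mk]⟩]
    · intro v2; fin_cases v2
      exacts [⟨0, by norm_num [Xmat, inP_inl, inP_inr, inP_mk]⟩, ⟨2, by norm_num [Xmat, inP_inl, inP_inr, inP_mk]⟩,
        ⟨2, by norm_num [Xmat, inP_inl, inP_inr, inP_mk]⟩, ⟨2, by norm_num [Xmat, inP_inl, inP_inr, inP_mk]⟩]
    · intro w1; fin_cases w1
      exacts [⟨0, by norm_num [Xmat, inP_inl, inP_inr, inP_mk]⟩, ⟨0, by norm_num [Xmat, inP_inl, inP_inr, inP_mk]⟩,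
        ⟨1, by norm_num [Xmat, inP_inl, inP_inr, inP_mk]⟩, ⟨1, by norm_num [Xmat, inP_inl, inP_inr, inP_mk]⟩]
    · intro w2; fin_cases w2
      exacts [⟨0, by norm_num [Xmat, inP_inl, inP_inr, inP_mk]⟩, ⟨2, by norm_num [Xmat, inP_inl, inP_inr, inP_mk]⟩,
        ⟨2, by norm_num [Xmat, inP_inl, inP_inr, inP_mk]⟩, ⟨2, by norm_num [Xmat, inP_inl, inP_inr, inP_mk]⟩]
  · rintro ⟨X, Y, hX, hY, h1, -⟩
    have hL := sum_entries_mul_left X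
      (!![1,0,0,0; 0,1,0,0; 0,0,1,1; 0,0,1,1] : Matrix (Fin 4) (Fin 4) ℝ) hX.2.2
    have hR := sum_entries_mul_right
      (!![1,0,0,0; 0,1,1,0; 0,1,0,1; 0,0,1,1] : Matrix (Fin 4) (Fin 4) ℝ) Y hY.2.1
    rw [h1, hR] at hL
    norm_num [Fin.sum_univ_succ, Matrix.cons_val_zero, Matrix.cons_val_succ] at hL
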